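/- For fixed τ ∈ ℍ with v = Im(τ) and u ∈ ℂ, the series R(u;τ) := Σ_{ν ∈ 1/2 + ℤ} { sgn(ν) − E((ν + Im(u)/v)√(2v)) } (−1)^{ν−1/2} e(−ν²τ/2) e(νu) converges absolutely, where E(t) := 2∫₀^t e^{−πw²}dw and e(w) := exp(2πiw). -/

import Mathlib

noncomputable section

open MeasureTheory Set Real

/-- `E(t) := 2 ∫₀^t e^{−πw²} dw`. -/
def EE (t : ℝ) : ℝ := 2 * ∫ w in (0 : ℝ)..t, Real.exp (-Real.pi * w ^ 2)

lemma EE_neg (t : ℝ) : EE (-t) = - EE t := by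
  have h := intervalIntegral.integral_comp_neg (a := (0:ℝ)) (b := -t)
      (f := fun w => Real.exp (-Real.pi * w ^ 2))
  simp only [neg_neg, neg_zero, neg_sq] at h
  unfold EE
  rw [h, intervalIntegral.integral_symm]
  ring

lemma EE_tail {t : ℝ} (ht : 1 ≤ t) : |1 - EE t| ≤ Real.exp (-Real.pi * t ^ 2) := by
  have ht0 : (0:ℝ) ≤ t := by linarith
  have hint : IntegrableOn (fun x : ℝ => Real.exp (-Real.pi * x ^ 2)) (Ioi t) :=
    (integrable_exp_neg_mul_sq Real.pi_pos).integrableOn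
  have hint0 : IntegrableOn (fun x : ℝ => Real.exp (-Real.pi * x ^ 2)) (Ioc 0 t) :=
    (integrable_exp_neg_mul_sq Real.pi_pos).integrableOn
  have half : (∫ x in Ioi (0:ℝ), Real.exp (-Real.pi * x ^ 2)) = 1/2 := by
    rw [integral_gaussian_Ioi]
    rw [div_self Real.pi_ne_zero, Real.sqrt_one]
  rw [← Ioc_union_Ioi_eq_Ioi ht0,
    setIntegral_union (Ioc_disjoint_Ioi le_rfl) measurableSet_Ioi hint0 hint] at half
  have hEE : 1 - EE t = 2 * ∫ x in Ioi t, Real.exp (-Real.pi * x ^ 2) := by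
    unfold EE
    rw [intervalIntegral.integral_of_le ht0]
    linarith [half]
  -- bound the tail integral
  have hIpos : 0 ≤ ∫ x in Ioi t, Real.exp (-Real.pi * x ^ 2) :=
    setIntegral_nonneg measurableSet_Ioi (fun x _ => (Real.exp_pos _).le)
  have hbound : (∫ x in Ioi t, Real.exp (-Real.pi * x ^ 2))
      ≤ ∫ x in Ioi t, Real.exp (Real.pi * t - Real.pi * t ^ 2) * Real.exp (-Real.pi * x) := by
    refine setIntegral_mono_on hint ?_ measurableSet_Ioi ?_
    · exact (exp_neg_integrableOn_Ioi t Real.pi_pos).const_mul _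
    · intro x hx
      rw [← Real.exp_add]
      apply Real.exp_le_exp.mpr
      have hx' : t < x := hx
      have h1 : 0 ≤ (x - t) * (x + t - 1) := mul_nonneg (by linarith) (by linarith)
      nlinarith [Real.pi_pos]
  have hval : (∫ x in Ioi t, Real.exp (Real.pi * t - Real.pi * t ^ 2) * Real.exp (-Real.pi * x))
      = Real.exp (Real.pi * t - Real.pi * t ^ 2) * (Real.pi⁻¹ * Real.exp (-(Real.pi * t))) := by
    rw [MeasureTheory.integral_const_mul]
    congr 1
    have := MeasureTheory.integral_comp_mul_left_Ioi (fun x => Real.exp (-x)) t Real.pi_pos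
    simp only [smul_eq_mul, neg_mul] at this ⊢
    rw [this, integral_exp_neg_Ioi]
  rw [hEE, abs_of_nonneg (by linarith)]
  have hπ2 : (2:ℝ) ≤ Real.pi := by linarith [Real.pi_gt_three]
  have hfin : Real.exp (Real.pi * t - Real.pi * t ^ 2) * (Real.pi⁻¹ * Real.exp (-(Real.pi * t)))
      = Real.pi⁻¹ * Real.exp (-Real.pi * t ^ 2) := by
    rw [show Real.exp (Real.pi * t - Real.pi * t ^ 2) * (Real.pi⁻¹ * Real.exp (-(Real.pi * t)))
        = Real.pi⁻¹ * (Real.exp (Real.pi * t - Real.pi * t ^ 2) * Real.exp (-(Real.pi * t))) from by ring,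
      ← Real.exp_add]
    ring_nf
  rw [hval] at hbound
  rw [hfin] at hbound
  have : Real.pi⁻¹ * Real.exp (-Real.pi * t ^ 2) ≤ (1/2) * Real.exp (-Real.pi * t ^ 2) := by
    apply mul_le_mul_of_nonneg_right _ (Real.exp_pos _).le
    rw [inv_le_comm₀ Real.pi_pos (by norm_num)]
    norm_num; linarith
  linarith

lemma EE_tail' {t : ℝ} (ht : t ≤ -1) : |(-1 : ℝ) - EE t| ≤ Real.exp (-Real.pi * t ^ 2) := by
  have h := EE_tail (t := -t) (by linarith)
  rw [EE_neg] at h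
  have : |(-1 : ℝ) - EE t| = |1 - - EE t| := by rw [← abs_neg]; ring_nf
  rw [this]
  simpa [neg_sq] using h

/-- Absolute convergence of Zwegers' series
`R(u;τ) = Σ_{ν ∈ 1/2+ℤ} {sgn(ν) − E((ν+Im(u)/v)√(2v))}(−1)^{ν−1/2} e(−ν²τ/2) e(νu)`,
parametrized by `ν = n + 1/2`, `n ∈ ℤ`. -/
theorem stmt18 (τ u : ℂ) (hτ : 0 < τ.im) :
    Summable (fun n : ℤ =>
      ((Real.sign ((n : ℝ) + 1 / 2)
          - EE ((((n : ℝ) + 1 / 2) + u.im / τ.im) * Real.sqrt (2 * τ.im)) : ℝ) : ℂ)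
        * (-1 : ℂ) ^ n
        * Complex.exp (-(Real.pi : ℂ) * Complex.I * ((n : ℂ) + 1 / 2) ^ 2 * τ)
        * Complex.exp (2 * (Real.pi : ℂ) * Complex.I * ((n : ℂ) + 1 / 2) * u)) := by
  set v : ℝ := τ.im with hv_def
  have hv : 0 < v := hτ
  set a : ℝ := u.im / v with ha_def
  have hav : a * v = u.im := by rw [ha_def, div_mul_cancel₀ _ hv.ne']
  set s : ℝ := Real.sqrt (2 * v) with hs_def
  have hs : 0 < s := Real.sqrt_pos.mpr (by linarith)
  set S : ℝ := v * |1 + 6 * a| / 2 with hS_def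
  set D : ℝ := -Real.pi * v / 4 - 3 * Real.pi * v * a - 2 * Real.pi * v * a ^ 2 with hD_def
  -- the comparison series
  have hg : Summable (fun n : ℤ => Real.exp D * Real.exp (-Real.pi * (v * n ^ 2 - 2 * S * |(n : ℝ)|))) := by
    have := (summable_pow_mul_jacobiTheta₂_term_bound S hv 0).mul_left (Real.exp D)
    simpa [Int.cast_abs] using this
  apply Summable.of_norm_bounded_eventually hg
  have hkey : ∀ n : ℤ,
      |Real.sign ((n:ℝ) + 1/2) - EE (((n:ℝ) + 1/2 + a) * s)|
        ≤ Real.exp (-Real.pi * (((n:ℝ) + 1/2 + a) * s) ^ 2) →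
      ‖((Real.sign ((n : ℝ) + 1 / 2)
          - EE ((((n : ℝ) + 1 / 2) + u.im / τ.im) * Real.sqrt (2 * τ.im)) : ℝ) : ℂ)
        * (-1 : ℂ) ^ n
        * Complex.exp (-(Real.pi : ℂ) * Complex.I * ((n : ℂ) + 1 / 2) ^ 2 * τ)
        * Complex.exp (2 * (Real.pi : ℂ) * Complex.I * ((n : ℂ) + 1 / 2) * u)‖
        ≤ Real.exp D * Real.exp (-Real.pi * (v * (n:ℝ) ^ 2 - 2 * S * |(n : ℝ)|)) := by
    intro n hEEb
    set ν : ℝ := (n:ℝ) + 1/2 with hν_def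
    have hc : ((n:ℂ) + 1/2) = ((ν : ℝ) : ℂ) := by push_cast [hν_def]; ring
    have hA : (-(Real.pi:ℂ) * Complex.I * ((n:ℂ) + 1/2) ^ 2 * τ).re = Real.pi * ν ^ 2 * v := by
      rw [hc]
      simp [Complex.mul_re, Complex.mul_im, pow_two, hv_def]
    have hB : (2 * (Real.pi:ℂ) * Complex.I * ((n:ℂ) + 1/2) * u).re = -(2 * Real.pi * ν * u.im) := by
      rw [hc]
      simp [Complex.mul_re, Complex.mul_im]
    rw [norm_mul, norm_mul, norm_mul]
    have h2 : ‖((-1 : ℂ) ^ n)‖ = 1 := by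
      rw [norm_zpow, norm_neg, norm_one, one_zpow]
    simp only [Complex.norm_exp, Complex.norm_real, Real.norm_eq_abs] at h2 ⊢
    rw [h2, mul_one, hA, hB]
    have harg : (ν + u.im / τ.im) * Real.sqrt (2 * τ.im) = (ν + a) * s := rfl
    rw [harg]
    have step1 : |Real.sign ν - EE ((ν + a) * s)| * Real.exp (Real.pi * ν ^ 2 * v)
          * Real.exp (-(2 * Real.pi * ν * u.im))
        ≤ Real.exp (-Real.pi * ((ν + a) * s) ^ 2) * Real.exp (Real.pi * ν ^ 2 * v)
          * Real.exp (-(2 * Real.pi * ν * u.im)) := by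
      apply mul_le_mul_of_nonneg_right _ (Real.exp_pos _).le
      exact mul_le_mul_of_nonneg_right hEEb (Real.exp_pos _).le
    refine step1.trans ?_
    rw [← Real.exp_add, ← Real.exp_add, ← Real.exp_add]
    apply Real.exp_le_exp.mpr
    have hs2 : s ^ 2 = 2 * v := Real.sq_sqrt (by linarith)
    rw [mul_pow, hs2, ← hav]
    have habs : -(|1 + 6 * a| * |(n:ℝ)|) ≤ (1 + 6 * a) * (n:ℝ) := by
      rw [← abs_mul]; exact neg_abs_le _
    have h3 := mul_le_mul_of_nonneg_left habs
      (show (0:ℝ) ≤ Real.pi * v from by positivity)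
    rw [hν_def, hD_def, hS_def]
    nlinarith [h3]
  rw [Int.cofinite_eq, Filter.eventually_sup]
  constructor
  · -- atBot
    rw [Filter.eventually_atBot]
    refine ⟨-(⌈1/s + |a| + 1⌉), fun n hn => ?_⟩
    apply hkey
    have hn' : (n : ℝ) ≤ -(1/s + |a| + 1) := by
      calc (n:ℝ) ≤ (-(⌈1/s + |a| + 1⌉) : ℤ) := by exact_mod_cast hn
        _ ≤ -(1/s + |a| + 1) := by
            push_cast; linarith [Int.le_ceil (1/s + |a| + 1)]
    have hν_neg : (n:ℝ) + 1/2 < 0 := by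
      have : 0 < 1/s := by positivity
      nlinarith [abs_nonneg a]
    have ht : ((n:ℝ) + 1/2 + a) * s ≤ -1 := by
      have h4 : (n:ℝ) + 1/2 + a ≤ -(1/s) := by
        have : a ≤ |a| := le_abs_self a
        have : 0 < 1/s := by positivity
        linarith [le_abs_self a]
      calc ((n:ℝ) + 1/2 + a) * s ≤ (-(1/s)) * s :=
            mul_le_mul_of_nonneg_right h4 hs.le
        _ = -1 := by field_simp
    rw [Real.sign_of_neg hν_neg]
    exact EE_tail' ht
  · -- atTop
    rw [Filter.eventually_atTop]
    refine ⟨⌈1/s + |a| + 1⌉, fun n hn => ?_⟩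
    apply hkey
    have hn' : 1/s + |a| + 1 ≤ (n : ℝ) := by
      calc (1/s + |a| + 1 : ℝ) ≤ (⌈1/s + |a| + 1⌉ : ℤ) := Int.le_ceil _
        _ ≤ (n : ℝ) := by exact_mod_cast hn
    have hν_pos : 0 < (n:ℝ) + 1/2 := by
      have : 0 < 1/s := by positivity
      nlinarith [abs_nonneg a]
    have ht : 1 ≤ ((n:ℝ) + 1/2 + a) * s := by
      have h4 : 1/s ≤ (n:ℝ) + 1/2 + a := by
        linarith [neg_abs_le a]
      calc (1:ℝ) = (1/s) * s := by field_simp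
        _ ≤ ((n:ℝ) + 1/2 + a) * s := mul_le_mul_of_nonneg_right h4 hs.le
    rw [Real.sign_of_pos hν_pos]
    exact EE_tail ht
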